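/- Let α, β0, γ0 be rational numbers with α > 1, γ0 > 0 and β0 = α + γ0, and let (u_n)_{n≥-1} be a nontrivial real solution of (n+α) u_n = (2n+β0) u_{n-1} − (n+γ0) u_{n-2} for all n ≥ 1. If α ≤ γ0 + 1, then (u_n) is a minimal solution if and only if u_0 = u_{-1}. If α > γ0 + 1, then (u_n) is a minimal solution if and only if α u_0 = (γ0 + 1) u_{-1}. -/

import Mathlib

set_option linter.unusedSectionVars false
set_option maxHeartbeats 800000


open Filter

/-- `u` solves the second-order recurrence `p n * u n = q n * u (n-1) + r n * u (n-2)`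
for all `n ≥ 1`. -/
def IsSol (p q r u : ℤ → ℝ) : Prop :=
  ∀ n : ℤ, 1 ≤ n → p n * u n = q n * u (n - 1) + r n * u (n - 2)

/-- A sequence (indexed from `-1`) is nontrivial if it is not identically zero. -/
def SeqNontrivial (u : ℤ → ℝ) : Prop :=
  ∃ n : ℤ, -1 ≤ n ∧ u n ≠ 0

/-- Linear independence of two sequences indexed from `-1`. -/
def SeqLinIndep (u v : ℤ → ℝ) : Prop :=
  ∀ c d : ℝ, (∀ n : ℤ, -1 ≤ n → c * u n + d * v n = 0) → c = 0 ∧ d = 0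

/-- A nontrivial solution `u` of the recurrence is minimal if there is another solution `v`,
linearly independent from `u`, with `u n / v n → 0`. -/
def IsMinimal (p q r u : ℤ → ℝ) : Prop :=
  IsSol p q r u ∧ SeqNontrivial u ∧
    ∃ v : ℤ → ℝ, IsSol p q r v ∧ SeqLinIndep u v ∧
      Tendsto (fun n : ℕ => u (n : ℤ) / v (n : ℤ)) atTop (nhds 0)


open Finset


noncomputable def auxP (A G : ℝ) : ℕ → ℝ :=
  fun n => ∏ j ∈ Finset.range n, (((j : ℝ) + 1 + G) / ((j : ℝ) + 1 + A))

noncomputable def auxS (A G : ℝ) : ℕ → ℝ :=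
  fun n => ∑ k ∈ Finset.range (n + 1), auxP A G k

section aux
variable {A G : ℝ} (hA : 1 < A) (hG : 0 < G)
include hA hG

lemma auxP_pos : ∀ n, 0 < auxP A G n := by
  intro n
  apply Finset.prod_pos
  intro j _
  apply div_pos <;> positivity

lemma auxP_succ (n : ℕ) :
    auxP A G (n + 1) = auxP A G n * (((n : ℝ) + 1 + G) / ((n : ℝ) + 1 + A)) := by
  unfold auxP
  rw [Finset.prod_range_succ]

lemma auxP_rec (n : ℕ) :
    ((n : ℝ) + 1 + A) * auxP A G (n + 1) = ((n : ℝ) + 1 + G) * auxP A G n := by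
  have h : ((n : ℝ) + 1 + A) ≠ 0 := by positivity
  rw [auxP_succ hA hG, mul_comm, mul_assoc, div_mul_cancel₀ _ h]
  ring

lemma auxP_zero : auxP A G 0 = 1 := by simp [auxP]

lemma auxS_zero : auxS A G 0 = 1 := by simp [auxS, auxP]

lemma auxS_succ (n : ℕ) : auxS A G (n + 1) = auxS A G n + auxP A G (n + 1) := by
  simp [auxS, Finset.sum_range_succ]

lemma auxS_strictMono : StrictMono (auxS A G) := by
  apply strictMono_nat_of_lt_succ
  intro n
  rw [auxS_succ hA hG]
  have := auxP_pos hA hG (n + 1)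
  linarith

lemma auxS_one_le (n : ℕ) : 1 ≤ auxS A G n := by
  have h0 : auxS A G 0 = 1 := auxS_zero hA hG
  rcases Nat.eq_zero_or_pos n with h | h
  · simp [h, h0]
  · have := (auxS_strictMono hA hG) h
    linarith

end aux

noncomputable def auxSz (A G : ℝ) : ℤ → ℝ :=
  fun n => if 0 ≤ n then auxS A G n.toNat else 0


section aux2
variable {A G : ℝ} (hA : 1 < A) (hG : 0 < G)
include hA hG

lemma auxSz_ofNat (m : ℕ) : auxSz A G (m : ℤ) = auxS A G m := by
  simp [auxSz]

lemma auxS_rec1 : (1 + A) * auxS A G 1 = 2 + A + G := by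
  have h := auxP_rec hA hG 0
  have h1 : auxS A G 1 = auxS A G 0 + auxP A G 1 := auxS_succ hA hG 0
  have h0 : auxS A G 0 = 1 := auxS_zero hA hG
  have hp0 : auxP A G 0 = 1 := auxP_zero hA hG
  push_cast at h
  rw [h1, h0]
  linear_combination h + hp0 * (1 + G)

lemma auxS_rec2 (k : ℕ) :
    ((k : ℝ) + 2 + A) * auxS A G (k + 2) =
      (2 * ((k : ℝ) + 2) + (A + G)) * auxS A G (k + 1) - ((k : ℝ) + 2 + G) * auxS A G k := by
  have h := auxP_rec hA hG (k + 1)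
  rw [auxS_succ hA hG (k + 1), auxS_succ hA hG k]
  push_cast at h
  linear_combination h

lemma isSol_auxSz :
    IsSol (fun n => (n : ℝ) + A) (fun n => 2 * (n : ℝ) + (A + G))
      (fun n => -((n : ℝ) + G)) (auxSz A G) := by
  intro n hn
  rcases eq_or_lt_of_le hn with h1 | h2
  · subst h1
    have e1 : ((1 : ℤ) : ℝ) = 1 := by norm_num
    have z1 : auxSz A G 1 = auxS A G 1 := by simp [auxSz]
    have z0 : auxSz A G 0 = auxS A G 0 := by simp [auxSz]
    have zm : auxSz A G (-1) = 0 := by norm_num [auxSz]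
    have h0 : auxS A G 0 = 1 := auxS_zero hA hG
    have hr := auxS_rec1 hA hG
    norm_num [z1, z0, zm, h0]
    linear_combination hr
  · obtain ⟨k, rfl⟩ : ∃ k : ℕ, n = (k : ℤ) + 2 := ⟨(n - 2).toNat, by omega⟩
    beta_reduce
    have e2 : ((k : ℤ) + 2) = ((k + 2 : ℕ) : ℤ) := by push_cast; ring
    have e1 : ((k : ℤ) + 2 - 1) = ((k + 1 : ℕ) : ℤ) := by push_cast; ring
    have e0 : ((k : ℤ) + 2 - 2) = ((k : ℕ) : ℤ) := by push_cast; ring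
    rw [e1, e0, e2, auxSz_ofNat hA hG, auxSz_ofNat hA hG, auxSz_ofNat hA hG]
    push_cast
    linear_combination auxS_rec2 hA hG k

end aux2

section aux3
variable {A G : ℝ} (hA : 1 < A) (hG : 0 < G)
include hA hG

lemma sol_formula {u : ℤ → ℝ}
    (hu : IsSol (fun n => (n : ℝ) + A) (fun n => 2 * (n : ℝ) + (A + G))
      (fun n => -((n : ℝ) + G)) u) :
    ∀ k : ℕ, u (k : ℤ) = u (-1) + (u 0 - u (-1)) * auxS A G k := by
  intro k
  induction k using Nat.strong_induction_on with
  | _ k ih =>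
    match k with
    | 0 =>
      rw [auxS_zero hA hG]
      push_cast
      ring
    | 1 =>
      have h := hu 1 (le_refl 1)
      beta_reduce at h
      norm_num at h
      have hr := auxS_rec1 hA hG
      have hA0 : (1 : ℝ) + A ≠ 0 := by positivity
      apply mul_left_cancel₀ hA0
      push_cast
      linear_combination h - (u 0 - u (-1)) * hr
    | (k + 2) =>
      have h := hu ((k : ℤ) + 2) (by omega)
      beta_reduce at h
      have e1 : ((k : ℤ) + 2 - 1) = ((k + 1 : ℕ) : ℤ) := by push_cast; ring
      have e0 : ((k : ℤ) + 2 - 2) = ((k : ℕ) : ℤ) := by push_cast; ring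
      rw [e1, e0] at h
      rw [ih (k + 1) (by omega), ih k (by omega)] at h
      have hr := auxS_rec2 hA hG k
      have hA0 : ((k : ℝ) + 2 + A) ≠ 0 := by positivity
      apply mul_left_cancel₀ hA0
      push_cast at h ⊢
      linear_combination h - (u 0 - u (-1)) * hr

end aux3

section aux4
variable {A G : ℝ} (hA : 1 < A) (hG : 0 < G)
include hA hG

lemma auxP_lb (hle : A ≤ G + 1) : ∀ k : ℕ, (1 + G) / ((k : ℝ) + 1 + G) ≤ auxP A G k := by
  intro k
  induction k with
  | zero =>
    rw [auxP_zero hA hG]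
    rw [div_le_one (by positivity)]
    norm_num
  | succ k ih =>
    rw [auxP_succ hA hG]
    push_cast
    have h1 : (1 + G) / ((k : ℝ) + 1 + 1 + G) ≤
        ((1 + G) / ((k : ℝ) + 1 + G)) * (((k : ℝ) + 1 + G) / ((k : ℝ) + 1 + A)) := by
      rw [div_mul_div_comm, mul_comm ((k:ℝ)+1+G), ← div_mul_div_comm,
        div_self (by positivity : ((k:ℝ)+1+G) ≠ 0), mul_one]
      apply div_le_div_of_nonneg_left (by positivity) (by positivity)
      linarith
    refine h1.trans ?_
    apply mul_le_mul_of_nonneg_right ih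
    positivity

lemma auxS_atTop (hle : A ≤ G + 1) : Tendsto (auxS A G) atTop atTop := by
  have hH : Tendsto (fun n : ℕ => ∑ i ∈ Finset.range n, (1 / ((i : ℝ) + 1))) atTop atTop :=
    Real.tendsto_sum_range_one_div_nat_succ_atTop
  have key : ∀ n : ℕ, (∑ i ∈ Finset.range (n + 1), (1 / ((i : ℝ) + 1))) ≤ auxS A G n := by
    intro n
    apply Finset.sum_le_sum
    intro k _
    refine le_trans ?_ (auxP_lb hA hG hle k)
    rw [div_le_div_iff₀ (by positivity) (by positivity)]
    have : (0:ℝ) ≤ (k:ℝ) * G := by positivity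
    nlinarith
  exact tendsto_atTop_mono key (hH.comp (tendsto_add_atTop_nat 1))

end aux4

noncomputable def auxV (A G : ℝ) : ℕ → ℝ :=
  fun n => ∏ j ∈ Finset.range n, (((j : ℝ) + 1 + A) / ((j : ℝ) + 1 + G + 1))

section aux5
variable {A G : ℝ} (hA : 1 < A) (hG : 0 < G)
include hA hG

lemma auxV_pos : ∀ n, 0 < auxV A G n := by
  intro n
  apply Finset.prod_pos
  intro j _
  apply div_pos <;> positivity

lemma auxRV (n : ℕ) : ((n : ℝ) + G + 1) * auxP A G n * auxV A G n = G + 1 := by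
  induction n with
  | zero => simp [auxP, auxV]
  | succ n ih =>
    have hV : auxV A G (n + 1) = auxV A G n * (((n : ℝ) + 1 + A) / ((n : ℝ) + 1 + G + 1)) := by
      unfold auxV
      rw [Finset.prod_range_succ]
    rw [auxP_succ hA hG, hV]
    push_cast
    have h1 : ((n : ℝ) + 1 + A) ≠ 0 := by positivity
    have h2 : ((n : ℝ) + 1 + G) ≠ 0 := by positivity
    have h3 : ((n : ℝ) + 1 + G + 1) ≠ 0 := by positivity
    field_simp
    linear_combination ih

lemma auxV_atTop (hlt : G + 1 < A) : Tendsto (auxV A G) atTop atTop := by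
  set ε := A - G - 1 with hε
  have hεpos : 0 < ε := by simp [hε]; linarith
  have hlb : ∀ n : ℕ, 1 + (ε / (G + 2)) * (∑ i ∈ Finset.range n, (1 / ((i : ℝ) + 1)))
      ≤ auxV A G n := by
    intro n
    induction n with
    | zero => simp [auxV]
    | succ n ih =>
      have hV : auxV A G (n + 1) = auxV A G n * (((n : ℝ) + 1 + A) / ((n : ℝ) + 1 + G + 1)) := by
        unfold auxV
        rw [Finset.prod_range_succ]
      rw [hV, Finset.sum_range_succ]
      have hfac : 1 + ε / ((n : ℝ) + 1 + G + 1) = (((n : ℝ) + 1 + A) / ((n : ℝ) + 1 + G + 1)) := by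
        field_simp
        ring
      have hVn := auxV_pos hA hG n
      have hsum : (0:ℝ) ≤ ∑ i ∈ Finset.range n, (1 / ((i : ℝ) + 1)) := by
        apply Finset.sum_nonneg; intro i _; positivity
      have hstep : (ε / (G + 2)) * (1 / ((n : ℝ) + 1)) ≤ ε / ((n : ℝ) + 1 + G + 1) := by
        rw [div_mul_div_comm, mul_one, div_le_div_iff₀ (by positivity) (by positivity)]
        have : (0:ℝ) ≤ (n : ℝ) * (G + 1) := by positivity
        nlinarith
      have hfacge : 1 ≤ (((n : ℝ) + 1 + A) / ((n : ℝ) + 1 + G + 1)) := by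
        rw [le_div_iff₀ (by positivity)]
        linarith
      calc 1 + ε / (G + 2) * ((∑ i ∈ Finset.range n, (1 / ((i : ℝ) + 1))) + 1 / ((n:ℝ) + 1))
          ≤ (1 + ε / (G + 2) * (∑ i ∈ Finset.range n, (1 / ((i : ℝ) + 1))))
              * (1 + ε / ((n : ℝ) + 1 + G + 1)) := by
            have e1 : 0 ≤ ε / ((n : ℝ) + 1 + G + 1) := by positivity
            have e2 : 0 ≤ ε / (G + 2) * (∑ i ∈ Finset.range n, (1 / ((i : ℝ) + 1))) := by positivity
            nlinarith [mul_nonneg e2 e1]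
        _ ≤ auxV A G n * (((n : ℝ) + 1 + A) / ((n : ℝ) + 1 + G + 1)) := by
            rw [hfac]
            exact mul_le_mul_of_nonneg_right ih (by positivity)
  have hH : Tendsto (fun n : ℕ => 1 + (ε / (G + 2)) *
      (∑ i ∈ Finset.range n, (1 / ((i : ℝ) + 1)))) atTop atTop := by
    apply tendsto_atTop_add_const_left
    exact (Real.tendsto_sum_range_one_div_nat_succ_atTop).const_mul_atTop (by positivity)
  exact tendsto_atTop_mono hlb hH

lemma auxR_tendsto (hlt : G + 1 < A) :
    Tendsto (fun n : ℕ => ((n : ℝ) + G + 1) * auxP A G n) atTop (nhds 0) := by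
  have h : ∀ n : ℕ, ((n : ℝ) + G + 1) * auxP A G n = (G + 1) / auxV A G n := by
    intro n
    have hV := auxV_pos hA hG n
    field_simp
    linear_combination auxRV hA hG n
  simp only [h]
  exact Tendsto.div_atTop tendsto_const_nhds (auxV_atTop hA hG hlt)

lemma auxS_closed (hlt : G + 1 < A) (n : ℕ) :
    auxS A G n = 1 + ((G + 1) - ((n : ℝ) + G + 1) * auxP A G n) / (A - G - 1) := by
  have hne : A - G - 1 ≠ 0 := by linarith
  induction n with
  | zero =>
    rw [auxS_zero hA hG, auxP_zero hA hG]
    field_simp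
    simp
  | succ n ih =>
    rw [auxS_succ hA hG, ih]
    have hr := auxP_rec hA hG n
    push_cast
    field_simp
    linear_combination hr

lemma auxS_tendsto (hlt : G + 1 < A) :
    Tendsto (auxS A G) atTop (nhds (1 + (G + 1) / (A - G - 1))) := by
  have hne : A - G - 1 ≠ 0 := by linarith
  have h : Tendsto (fun n : ℕ => 1 + ((G + 1) - ((n : ℝ) + G + 1) * auxP A G n) / (A - G - 1))
      atTop (nhds (1 + ((G + 1) - 0) / (A - G - 1))) := by
    apply Tendsto.const_add
    apply Tendsto.div_const
    exact (tendsto_const_nhds).sub (auxR_tendsto hA hG hlt)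
  simp only [sub_zero] at h
  apply h.congr
  intro n
  exact (auxS_closed hA hG hlt n).symm

end aux5

/-- Let `α, β0, γ0 ∈ ℚ` with `α > 1`, `γ0 > 0` and `β0 = α + γ0`, and let `u`
be a nontrivial real solution of `(n+α) u n = (2n+β0) u (n-1) − (n+γ0) u (n-2)` for `n ≥ 1`.
If `α ≤ γ0 + 1`, then `u` is minimal iff `u 0 = u (-1)`; if `α > γ0 + 1`, then `u` is minimal
iff `α * u 0 = (γ0 + 1) * u (-1)`. -/
theorem stmt_9 (α β0 γ0 : ℚ) (hα : 1 < α) (hγ : 0 < γ0) (hβ : β0 = α + γ0) (u : ℤ → ℝ)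
    (hu : IsSol (fun n => (n : ℝ) + (α : ℝ)) (fun n => 2 * (n : ℝ) + (β0 : ℝ))
      (fun n => -((n : ℝ) + (γ0 : ℝ))) u)
    (hnt : SeqNontrivial u) :
    (α ≤ γ0 + 1 →
      (IsMinimal (fun n => (n : ℝ) + (α : ℝ)) (fun n => 2 * (n : ℝ) + (β0 : ℝ))
          (fun n => -((n : ℝ) + (γ0 : ℝ))) u ↔ u 0 = u (-1))) ∧
    (γ0 + 1 < α →
      (IsMinimal (fun n => (n : ℝ) + (α : ℝ)) (fun n => 2 * (n : ℝ) + (β0 : ℝ))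
          (fun n => -((n : ℝ) + (γ0 : ℝ))) u ↔
        (α : ℝ) * u 0 = ((γ0 : ℝ) + 1) * u (-1))) := by
  classical
  have hA : 1 < ((α : ℝ)) := by exact_mod_cast hα
  have hG : 0 < ((γ0 : ℝ)) := by exact_mod_cast hγ
  have hβR : ((β0 : ℝ)) = ((α : ℝ)) + ((γ0 : ℝ)) := by rw [hβ]; push_cast; ring
  set A := ((α : ℝ)) with hAdef
  set G := ((γ0 : ℝ)) with hGdef
  have hq : (fun n : ℤ => 2 * (n : ℝ) + (β0 : ℝ)) = (fun n : ℤ => 2 * (n : ℝ) + (A + G)) := by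
    funext n; rw [hβR]
  rw [hq] at hu ⊢
  set c := u (-1) with hcdef
  set d := u 0 - u (-1) with hddef
  have hform : ∀ k : ℕ, u (k : ℤ) = c + d * auxS A G k := sol_formula hA hG hu
  have hu0 : u 0 = c + d := by rw [hddef, hcdef]; ring
  have hcases : ∀ n : ℤ, -1 ≤ n → n = -1 ∨ ∃ k : ℕ, n = (k : ℤ) := by
    intro n hn
    rcases eq_or_lt_of_le hn with h | h
    · exact Or.inl h.symm
    · exact Or.inr ⟨n.toNat, by omega⟩
  have hcd : ¬(c = 0 ∧ d = 0) := by
    rintro ⟨hc0, hd0⟩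
    obtain ⟨m, hm, hum⟩ := hnt
    rcases hcases m hm with rfl | ⟨k, rfl⟩
    · exact hum hc0
    · exact hum (by rw [hform k, hc0, hd0]; ring)
  constructor
  · -- case A ≤ G + 1
    intro hle'
    have hle : A ≤ G + 1 := by rw [hAdef, hGdef]; exact_mod_cast hle'
    have hSat : Tendsto (auxS A G) atTop atTop := auxS_atTop hA hG hle
    constructor
    · intro hmin
      by_contra hne
      have hd : d ≠ 0 := fun h => hne (by rw [hddef] at h; linarith [sub_eq_zero.mp h])
      obtain ⟨-, -, v, hv, hind, hlim⟩ := hmin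
      have hformv : ∀ k : ℕ, v (k : ℤ) = v (-1) + (v 0 - v (-1)) * auxS A G k :=
        sol_formula hA hG hv
      set cv := v (-1) with hcvdef
      set e := v 0 - v (-1) with hedef
      by_cases he : e = 0
      · by_cases hcv : cv = 0
        · have hz : ∀ n : ℤ, -1 ≤ n → (0 : ℝ) * u n + 1 * v n = 0 := by
            intro n hn
            rcases hcases n hn with rfl | ⟨k, rfl⟩
            · simp [← hcvdef, hcv]
            · rw [hformv k, he, hcv]; ring
          exact one_ne_zero (hind 0 1 hz).2
        · have hveq : ∀ k : ℕ, v (k : ℤ) = cv := by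
            intro k; rw [hformv k, he]; ring
          have hu0' : Tendsto (fun k : ℕ => u (k : ℤ)) atTop (nhds 0) := by
            have h1 : Tendsto (fun k : ℕ => (u (k : ℤ) / v (k : ℤ)) * cv) atTop
                (nhds (0 * cv)) := hlim.mul_const cv
            rw [zero_mul] at h1
            apply h1.congr
            intro k
            rw [hveq k, div_mul_cancel₀ _ hcv]
          have h2 : Tendsto (fun k : ℕ => |d * auxS A G k|) atTop (nhds |0 - c|) := by
            apply Tendsto.abs
            have h3 : Tendsto (fun k : ℕ => u (k : ℤ) - c) atTop (nhds (0 - c)) :=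
              hu0'.sub_const c
            apply h3.congr
            intro k; rw [hform k]; ring
          have h4 : Tendsto (fun k : ℕ => |d * auxS A G k|) atTop atTop := by
            have h5 : Tendsto (fun k : ℕ => |d| * auxS A G k) atTop atTop :=
              hSat.const_mul_atTop (abs_pos.mpr hd)
            apply h5.congr
            intro k
            rw [abs_mul, abs_of_pos (lt_of_lt_of_le one_pos (auxS_one_le hA hG k))]
          exact not_tendsto_atTop_of_tendsto_nhds h2 h4
      · have hrw : ∀ k : ℕ, u (k : ℤ) / v (k : ℤ) =
            (c / auxS A G k + d) / (cv / auxS A G k + e) := by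
          intro k
          have hS1 := auxS_one_le hA hG k
          have hS0 : auxS A G k ≠ 0 := by linarith
          have h1 : c / auxS A G k + d = (c + d * auxS A G k) / auxS A G k := by field_simp
          have h2 : cv / auxS A G k + e = (cv + e * auxS A G k) / auxS A G k := by field_simp
          rw [hform k, hformv k, h1, h2, div_div_div_cancel_right₀ hS0]
        have hnum : Tendsto (fun k : ℕ => c / auxS A G k + d) atTop (nhds (0 + d)) :=
          (Tendsto.div_atTop tendsto_const_nhds hSat).add tendsto_const_nhds
        have hden : Tendsto (fun k : ℕ => cv / auxS A G k + e) atTop (nhds (0 + e)) :=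
          (Tendsto.div_atTop tendsto_const_nhds hSat).add tendsto_const_nhds
        rw [zero_add] at hnum hden
        have hdiv : Tendsto (fun k : ℕ => u (k : ℤ) / v (k : ℤ)) atTop (nhds (d / e)) := by
          have := hnum.div hden he
          exact this.congr fun k => (hrw k).symm
        have : d / e = 0 := tendsto_nhds_unique hdiv hlim
        exact hd ((div_eq_zero_iff.mp this).resolve_right he)
    · intro heq
      have hd0 : d = 0 := by rw [hddef, heq]; ring
      have hc : c ≠ 0 := fun h => hcd ⟨h, hd0⟩
      refine ⟨hu, hnt, auxSz A G, isSol_auxSz hA hG, ?_, ?_⟩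
      · intro c' d' h
        have h1 := h (-1) (by norm_num)
        have hz : auxSz A G (-1) = 0 := by norm_num [auxSz]
        rw [hz] at h1
        have hc' : c' = 0 := by
          rcases mul_eq_zero.mp (by linarith : c' * c = 0) with h | h
          · exact h
          · exact absurd h hc
        have h2 := h 0 (by norm_num)
        have hz0 : auxSz A G 0 = 1 := by
          have := auxSz_ofNat hA hG (A := A) (G := G) 0
          norm_num [auxSz, auxS_zero hA hG]
        rw [hz0, hc'] at h2
        constructor
        · exact hc'
        · linarith
      · have : Tendsto (fun k : ℕ => c / auxS A G k) atTop (nhds 0) :=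
          Tendsto.div_atTop tendsto_const_nhds hSat
        apply this.congr
        intro k
        rw [auxSz_ofNat hA hG, hform k, hd0]
        ring_nf
  · -- case G + 1 < A
    intro hlt'
    have hlt : G + 1 < A := by rw [hAdef, hGdef]; exact_mod_cast hlt'
    have hεne : A - G - 1 ≠ 0 := by linarith
    set SL := 1 + (G + 1) / (A - G - 1) with hSLdef
    have hStend : Tendsto (auxS A G) atTop (nhds SL) := auxS_tendsto hA hG hlt
    have hutend : Tendsto (fun k : ℕ => u (k : ℤ)) atTop (nhds (c + d * SL)) := by
      have h1 : Tendsto (fun k : ℕ => c + d * auxS A G k) atTop (nhds (c + d * SL)) :=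
        tendsto_const_nhds.add (hStend.const_mul d)
      exact h1.congr fun k => (hform k).symm
    have hkey : (c + d * SL) * (A - G - 1) = A * u 0 - (G + 1) * c := by
      rw [hSLdef, hu0]
      field_simp
      ring
    have hLiff : (A * u 0 = (G + 1) * c) ↔ c + d * SL = 0 := by
      constructor
      · intro h
        have h2 : (c + d * SL) * (A - G - 1) = 0 := by rw [hkey, h]; ring
        exact (mul_eq_zero.mp h2).resolve_right hεne
      · intro h
        have := hkey
        rw [h, zero_mul] at this
        linarith
    constructor
    · intro hmin
      by_contra hne
      have hL : c + d * SL ≠ 0 := fun h => hne (hLiff.mpr h)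
      obtain ⟨-, -, v, hv, hind, hlim⟩ := hmin
      have hformv : ∀ k : ℕ, v (k : ℤ) = v (-1) + (v 0 - v (-1)) * auxS A G k :=
        sol_formula hA hG hv
      set cv := v (-1) with hcvdef
      set e := v 0 - v (-1) with hedef
      have hvtend : Tendsto (fun k : ℕ => v (k : ℤ)) atTop (nhds (cv + e * SL)) := by
        have h1 : Tendsto (fun k : ℕ => cv + e * auxS A G k) atTop (nhds (cv + e * SL)) :=
          tendsto_const_nhds.add (hStend.const_mul e)
        exact h1.congr fun k => (hformv k).symm
      have hev : ∀ᶠ k : ℕ in atTop, v (k : ℤ) ≠ 0 := by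
        by_cases he : e = 0
        · by_cases hcv : cv = 0
          · exfalso
            have hz : ∀ n : ℤ, -1 ≤ n → (0 : ℝ) * u n + 1 * v n = 0 := by
              intro n hn
              rcases hcases n hn with rfl | ⟨k, rfl⟩
              · simp [← hcvdef, hcv]
              · rw [hformv k, he, hcv]; ring
            exact one_ne_zero (hind 0 1 hz).2
          · apply Eventually.of_forall
            intro k
            rw [hformv k, he]
            simpa using hcv
        · have hinj : ∀ k l : ℕ, v (k : ℤ) = 0 → v (l : ℤ) = 0 → k = l := by
            intro k l hk hl
            rw [hformv k] at hk
            rw [hformv l] at hl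
            have : e * auxS A G k = e * auxS A G l := by linarith
            have hS : auxS A G k = auxS A G l := mul_left_cancel₀ he this
            exact (auxS_strictMono hA hG).injective hS
          by_cases hex : ∃ k0 : ℕ, v (k0 : ℤ) = 0
          · obtain ⟨k0, hk0⟩ := hex
            filter_upwards [eventually_gt_atTop k0] with k hk
            intro hvk
            exact absurd (hinj k k0 hvk hk0) (by omega)
          · push_neg at hex
            exact Eventually.of_forall hex
      have hueq : ∀ᶠ k : ℕ in atTop, u (k : ℤ) = (u (k : ℤ) / v (k : ℤ)) * v (k : ℤ) := by
        filter_upwards [hev] with k hk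
        rw [div_mul_cancel₀ _ hk]
      have hto0 : Tendsto (fun k : ℕ => (u (k : ℤ) / v (k : ℤ)) * v (k : ℤ)) atTop
          (nhds (0 * (cv + e * SL))) := hlim.mul hvtend
      rw [zero_mul] at hto0
      have hu0'' : Tendsto (fun k : ℕ => u (k : ℤ)) atTop (nhds 0) :=
        Tendsto.congr' (EventuallyEq.symm hueq) hto0
      exact hL (tendsto_nhds_unique hutend hu0'')
    · intro hcond
      have hL0 : c + d * SL = 0 := hLiff.mp hcond
      rw [hL0] at hutend
      refine ⟨hu, hnt, (fun _ => 1), ?_, ?_, ?_⟩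
      · intro n hn
        push_cast
        ring
      · intro c' d' h
        have hd' : d' = 0 := by
          have h1 : Tendsto (fun k : ℕ => c' * u (k : ℤ) + d') atTop
              (nhds (c' * 0 + d')) := (hutend.const_mul c').add_const d'
          have h2 : Tendsto (fun k : ℕ => c' * u (k : ℤ) + d') atTop (nhds 0) := by
            have : (fun k : ℕ => c' * u (k : ℤ) + d') = fun _ => (0 : ℝ) := by
              funext k
              have := h (k : ℤ) (by omega)
              simpa using this
            rw [this]
            exact tendsto_const_nhds
          have := tendsto_nhds_unique h1 h2
          rw [mul_zero, zero_add] at this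
          exact this
        obtain ⟨m, hm, hum⟩ := hnt
        have h3 := h m hm
        rw [hd'] at h3
        have hc' : c' = 0 := by
          rcases mul_eq_zero.mp (by linarith : c' * u m = 0) with h4 | h4
          · exact h4
          · exact absurd h4 hum
        exact ⟨hc', hd'⟩
      · simpa using hutend
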